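/- Let h be a real polynomial of degree at most q with Chebyshev expansion h(x) = Σ_{j=0}^q a_j T_j(x/K), let f(θ) = h(K cos θ), and fix nonnegative integers k, l and u > 0 with s = ⌈k + ul⌉. Then Σ_{j=1}^q j^k (1 + log j)^l |a_j| ≤ C (e^u/u)^l · sup_{θ ∈ [0,2π]} |f^(s+1)(θ)| for a universal constant C. -/

import Mathlib

open Real Finset intervalIntegral

section Aux

lemma contDiff_coslin (j c : ℝ) {n : ℕ∞} : ContDiff ℝ n (fun θ : ℝ => Real.cos (j*θ + c)) :=
  Real.contDiff_cos.comp ((contDiff_const.mul contDiff_id).add contDiff_const) |>.of_le le_top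

lemma hasDerivAt_coslin (j c θ : ℝ) :
    HasDerivAt (fun θ : ℝ => Real.cos (j*θ + c)) (j * Real.cos (j*θ + (c + π/2))) θ := by
  have h1 : HasDerivAt (fun θ : ℝ => j*θ + c) j θ := by
    simpa using ((hasDerivAt_id θ).const_mul j).add_const c
  have := (Real.hasDerivAt_cos (j*θ + c)).comp θ h1
  exact this.congr_deriv (by rw [← add_assoc, Real.cos_add_pi_div_two]; ring)

lemma iteratedDeriv_cmul {n : ℕ} {f : ℝ → ℝ} (h : ContDiff ℝ n f) (c : ℝ) (x : ℝ) :
    iteratedDeriv n (fun z => c * f z) x = c * iteratedDeriv n f x := by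
  rw [← iteratedDerivWithin_univ, ← iteratedDerivWithin_univ]
  exact iteratedDerivWithin_const_mul (Set.mem_univ x) uniqueDiffOn_univ c h.contDiffWithinAt

lemma iteratedDeriv_coslin (j : ℝ) : ∀ (n : ℕ) (c : ℝ),
    iteratedDeriv n (fun θ : ℝ => Real.cos (j*θ + c)) =
      fun θ => j^n * Real.cos (j*θ + (c + n * (π/2)))
  | 0, c => by funext θ; simp
  | (n+1), c => by
    rw [iteratedDeriv_succ']
    have hd : deriv (fun θ : ℝ => Real.cos (j*θ + c)) =
        fun θ => j * Real.cos (j*θ + (c + π/2)) :=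
      funext fun θ => (hasDerivAt_coslin j c θ).deriv
    rw [hd]
    funext θ
    rw [iteratedDeriv_cmul (contDiff_coslin j (c + π/2)) j θ]
    rw [iteratedDeriv_coslin j n (c + π/2)]
    push_cast
    ring_nf

lemma iteratedDeriv_fsum {ι : Type*} {u : Finset ι} {f : ι → ℝ → ℝ} {n : ℕ}
    (h : ∀ i ∈ u, ContDiff ℝ n (f i)) (x : ℝ) :
    iteratedDeriv n (fun z => ∑ i ∈ u, f i z) x = ∑ i ∈ u, iteratedDeriv n (f i) x := by
  have := iteratedFDeriv_sum (𝕜 := ℝ) h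
  simp only [iteratedDeriv_eq_iteratedFDeriv]
  rw [show (fun z => ∑ i ∈ u, f i z) = (∑ i ∈ u, f i ·) from rfl, this]
  simp [ContinuousMultilinearMap.sum_apply]

lemma integral_coslin_zero (m : ℤ) (hm : m ≠ 0) (d : ℝ) :
    ∫ θ in (0:ℝ)..(2*π), Real.cos ((m:ℝ)*θ + d) = 0 := by
  have hm' : (m:ℝ) ≠ 0 := Int.cast_ne_zero.2 hm
  have hder : ∀ θ ∈ Set.uIcc (0:ℝ) (2*π),
      HasDerivAt (fun θ => Real.sin ((m:ℝ)*θ + d) / m) (Real.cos ((m:ℝ)*θ + d)) θ := by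
    intro θ _
    have h1 : HasDerivAt (fun θ : ℝ => (m:ℝ)*θ + d) (m:ℝ) θ := by
      simpa using ((hasDerivAt_id θ).const_mul (m:ℝ)).add_const d
    have := ((Real.hasDerivAt_sin ((m:ℝ)*θ + d)).comp θ h1).div_const (m:ℝ)
    exact this.congr_deriv (mul_div_cancel_right₀ _ hm')
  rw [intervalIntegral.integral_eq_sub_of_hasDerivAt hder
      ((contDiff_coslin (n := ⊤) _ _).continuous.intervalIntegrable _ _)]
  have : (m:ℝ) * (2*π) + d = d + m * (2*π) := by ring
  rw [this, Real.sin_add_int_mul_two_pi]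
  simp

lemma integral_orth (i j : ℕ) (hi : 1 ≤ i) (hj : 1 ≤ j) (c : ℝ) :
    ∫ θ in (0:ℝ)..(2*π), Real.cos ((i:ℝ)*θ + c) * Real.cos ((j:ℝ)*θ + c)
      = if i = j then π else 0 := by
  have key0 : ∀ A B : ℝ, Real.cos A * Real.cos B = (Real.cos (A - B) + Real.cos (A + B))/2 :=
    fun A B => by rw [Real.cos_sub, Real.cos_add]; ring
  have key : ∀ θ : ℝ, Real.cos ((i:ℝ)*θ + c) * Real.cos ((j:ℝ)*θ + c)
      = (Real.cos ((Int.cast ((i:ℤ) - (j:ℤ)) : ℝ)*θ + 0)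
          + Real.cos ((Int.cast ((i:ℤ) + (j:ℤ)) : ℝ)*θ + 2*c))/2 := by
    intro θ
    rw [key0 ((i:ℝ)*θ + c) ((j:ℝ)*θ + c)]
    have e1 : ((i:ℝ)*θ + c) - ((j:ℝ)*θ + c) = (Int.cast ((i:ℤ) - (j:ℤ)) : ℝ)*θ + 0 := by
      push_cast; ring
    have e2 : ((i:ℝ)*θ + c) + ((j:ℝ)*θ + c) = (Int.cast ((i:ℤ) + (j:ℤ)) : ℝ)*θ + 2*c := by
      push_cast; ring
    rw [e1, e2]
  simp_rw [key]
  rw [intervalIntegral.integral_div, intervalIntegral.integral_add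
      ((contDiff_coslin (n := ⊤) _ _).continuous.intervalIntegrable _ _)
      ((contDiff_coslin (n := ⊤) _ _).continuous.intervalIntegrable _ _),
      integral_coslin_zero ((i:ℤ)+(j:ℤ)) (by omega) (2*c)]
  by_cases hij : i = j
  · subst hij
    rw [if_pos rfl]
    have : (i:ℤ) - (i:ℤ) = 0 := by ring
    simp only [this, Int.cast_zero, zero_mul, zero_add, Real.cos_zero]
    rw [intervalIntegral.integral_const]; simp only [smul_eq_mul, mul_one]
    ring
  · rw [integral_coslin_zero ((i:ℤ)-(j:ℤ)) (by omega) 0, if_neg hij]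
    ring

lemma log_ineq {u : ℝ} (hu : 0 < u) {j : ℕ} (hj : 1 ≤ j) :
    1 + Real.log j ≤ (Real.exp u / u) * (j:ℝ) ^ u := by
  have hj1 : (1:ℝ) ≤ (j:ℝ) := by exact_mod_cast hj
  have ht : 0 ≤ Real.log j := Real.log_nonneg hj1
  have hrw : (j:ℝ) ^ u = Real.exp (Real.log j * u) := by
    rw [Real.rpow_def_of_pos (by linarith)]
  set y : ℝ := u + Real.log j * u with hy
  have h2 : y ≤ Real.exp y := (Real.add_one_le_exp (y - 1)).trans_eq' (by ring) |>.trans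
    (Real.exp_le_exp.2 (by linarith))
  have : Real.exp u / u * (j:ℝ) ^ u = Real.exp y / u := by
    rw [hrw, hy, Real.exp_add]; ring
  rw [this, le_div_iff₀ hu]
  calc (1 + Real.log j) * u = y := by rw [hy]; ring
    _ ≤ Real.exp y := h2

lemma sum_inv_sq_le' : ∀ q : ℕ, ∑ j ∈ Finset.Icc 1 q, (1/(j:ℝ))^2 ≤ 2 - 2/((q:ℝ)+1)
  | 0 => by simp
  | (q+1) => by
    rw [Finset.sum_Icc_succ_top (by omega : 1 ≤ q+1)]
    have ih := sum_inv_sq_le' q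
    have hq : (0:ℝ) < (q:ℝ)+1 := by positivity
    have hq2 : (0:ℝ) < (q:ℝ)+2 := by positivity
    have key : (1/((q:ℝ)+1))^2 ≤ 2/((q:ℝ)+1) - 2/((q:ℝ)+2) := by
      rw [div_sub_div _ _ (ne_of_gt hq) (ne_of_gt hq2), div_pow, one_pow,
        div_le_div_iff₀ (by positivity) (by positivity)]
      nlinarith
    push_cast
    push_cast at ih
    rw [show (q:ℝ)+1+1 = (q:ℝ)+2 by ring]
    linarith

lemma sum_inv_sq_le (q : ℕ) : ∑ j ∈ Finset.Icc 1 q, (1/(j:ℝ))^2 ≤ 2 := by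
  have h := sum_inv_sq_le' q
  have : (0:ℝ) ≤ 2/((q:ℝ)+1) := by positivity
  linarith

end Aux

/-- **Chebyshev coefficient bounds with logarithmic factors.**  Let `h` be a real
polynomial of degree at most `q` with Chebyshev expansion `h(x) = ∑_{j=0}^q a_j T_j(x/K)`
on `[-K, K]`, let `f(θ) = h(K cos θ)`, fix `k, l ≥ 0` and `u > 0`, and set
`s = ⌈k + ul⌉`.  Then `∑_{j=1}^q j^k (1 + log j)^l |a_j| ≤ C (e^u/u)^l ·
sup_{[0,2π]} |f^(s+1)|` for a universal constant `C`. -/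
theorem stmt_19 :
    ∃ C : ℝ, 0 < C ∧
      ∀ (q : ℕ) (h : Polynomial ℝ) (K : ℝ) (a : ℕ → ℝ) (k l : ℕ) (u : ℝ),
        h.natDegree ≤ q → 0 < K → 0 < u →
        (∀ x ∈ Set.Icc (-K) K,
          h.eval x = ∑ j ∈ Finset.range (q + 1),
            a j * (Polynomial.Chebyshev.T ℝ (j : ℤ)).eval (x / K)) →
        ∀ F : ℝ,
          (∀ θ ∈ Set.Icc (0 : ℝ) (2 * Real.pi),
            |iteratedDeriv (⌈(k : ℝ) + u * l⌉₊ + 1)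
              (fun θ => h.eval (K * Real.cos θ)) θ| ≤ F) →
          ∑ j ∈ Finset.Icc 1 q, (j : ℝ) ^ k * (1 + Real.log j) ^ l * |a j| ≤
            C * (Real.exp u / u) ^ l * F := by
  refine ⟨2, by norm_num, ?_⟩
  intro q h K a k l u hdeg hK hu hcheb F hF
  set s : ℕ := ⌈(k : ℝ) + u * l⌉₊ with hs
  set c : ℝ := 0 + ((s+1 : ℕ) : ℝ) * (π/2) with hc
  set b : ℕ → ℝ := fun j => a j * (j:ℝ)^(s+1) with hb
  set G : ℝ → ℝ := fun θ => ∑ j ∈ Finset.Icc 1 q, b j * Real.cos ((j:ℝ)*θ + c) with hGdef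
  -- f equals the cosine sum
  have hfg : (fun θ => h.eval (K * Real.cos θ))
      = fun θ => ∑ j ∈ Finset.range (q+1), a j * Real.cos ((j:ℝ)*θ + 0) := by
    funext θ
    have hx : K * Real.cos θ ∈ Set.Icc (-K) K := by
      constructor <;> nlinarith [Real.neg_one_le_cos θ, Real.cos_le_one θ]
    rw [hcheb _ hx]
    refine Finset.sum_congr rfl fun j _ => ?_
    rw [show K * Real.cos θ / K = Real.cos θ by field_simp]
    rw [Polynomial.Chebyshev.T_real_cos θ (j:ℤ)]
    congr 1
    push_cast
    ring
  -- iterated derivative formula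
  have hG : ∀ θ, iteratedDeriv (s+1) (fun θ => h.eval (K * Real.cos θ)) θ = G θ := by
    intro θ
    rw [hfg, iteratedDeriv_fsum
      (fun j _ => contDiff_const.mul (contDiff_coslin ((j:ℕ):ℝ) 0)) θ]
    have step : ∀ j : ℕ,
        iteratedDeriv (s+1) (fun θ : ℝ => a j * Real.cos ((j:ℝ)*θ + 0)) θ
        = a j * ((j:ℝ)^(s+1) * Real.cos ((j:ℝ)*θ + c)) := by
      intro j
      rw [iteratedDeriv_cmul (contDiff_coslin _ _) (a j) θ,
        iteratedDeriv_coslin (j:ℝ) (s+1) 0]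
    simp only [step]
    rw [hGdef]
    have h1 : ∑ x ∈ Finset.range (q+1), a x * ((x:ℝ)^(s+1) * Real.cos ((x:ℝ)*θ + c))
        = ∑ x ∈ Finset.Icc 1 q, a x * ((x:ℝ)^(s+1) * Real.cos ((x:ℝ)*θ + c)) := by
      refine (Finset.sum_subset ?_ ?_).symm
      · intro x hx
        simp only [Finset.mem_Icc, Finset.mem_range] at *
        omega
      · intro x hx hnx
        have hx0 : x = 0 := by
          simp only [Finset.mem_Icc, Finset.mem_range] at *
          omega
        subst hx0
        simp [zero_pow]
    rw [h1]
    exact Finset.sum_congr rfl fun x _ => by rw [hb]; ring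
  have hGbound : ∀ θ ∈ Set.Icc (0:ℝ) (2*π), |G θ| ≤ F := by
    intro θ hθ
    rw [← hG θ]
    exact hF θ hθ
  have hF0 : 0 ≤ F :=
    le_trans (abs_nonneg _) (hF 0 ⟨le_refl _, by positivity⟩)
  have hGcont : Continuous G :=
    continuous_finset_sum _ fun j _ =>
      continuous_const.mul ((contDiff_coslin (n := ⊤) ((j:ℕ):ℝ) c).continuous)
  -- Parseval
  have hint : ∫ θ in (0:ℝ)..(2*π), G θ * G θ = π * ∑ j ∈ Finset.Icc 1 q, (b j)^2 := by
    have expand : ∀ θ : ℝ, G θ * G θ = ∑ i ∈ Finset.Icc 1 q, ∑ j ∈ Finset.Icc 1 q,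
        (b i * b j) * (Real.cos ((i:ℝ)*θ + c) * Real.cos ((j:ℝ)*θ + c)) := by
      intro θ
      rw [hGdef]
      rw [Finset.sum_mul_sum]
      exact Finset.sum_congr rfl fun i _ => Finset.sum_congr rfl fun j _ => by ring
    rw [intervalIntegral.integral_congr (fun θ _ => expand θ)]
    rw [intervalIntegral.integral_finset_sum (fun i _ =>
      (show Continuous (fun θ : ℝ => ∑ j ∈ Finset.Icc 1 q,
          (b i * b j) * (Real.cos ((i:ℝ)*θ + c) * Real.cos ((j:ℝ)*θ + c))) from
      (continuous_finset_sum _ fun j _ => continuous_const.mul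
        (((contDiff_coslin (n := ⊤) _ c).continuous).mul
          ((contDiff_coslin (n := ⊤) _ c).continuous)))).intervalIntegrable _ _)]
    have inner : ∀ i ∈ Finset.Icc 1 q,
        (∫ θ in (0:ℝ)..(2*π), ∑ j ∈ Finset.Icc 1 q,
          (b i * b j) * (Real.cos ((i:ℝ)*θ + c) * Real.cos ((j:ℝ)*θ + c)))
        = (b i)^2 * π := by
      intro i hi
      rw [intervalIntegral.integral_finset_sum (fun j _ =>
        (show Continuous (fun θ : ℝ =>
            (b i * b j) * (Real.cos ((i:ℝ)*θ + c) * Real.cos ((j:ℝ)*θ + c))) from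
        (continuous_const.mul
          (((contDiff_coslin (n := ⊤) _ c).continuous).mul
            ((contDiff_coslin (n := ⊤) _ c).continuous)))).intervalIntegrable _ _)]
      have hi1 : 1 ≤ i := (Finset.mem_Icc.1 hi).1
      have term : ∀ j ∈ Finset.Icc 1 q,
          (∫ θ in (0:ℝ)..(2*π),
            (b i * b j) * (Real.cos ((i:ℝ)*θ + c) * Real.cos ((j:ℝ)*θ + c)))
          = if i = j then (b i * b j) * π else 0 := by
        intro j hj
        rw [intervalIntegral.integral_const_mul,
          integral_orth i j hi1 (Finset.mem_Icc.1 hj).1 c]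
        split <;> simp
      rw [Finset.sum_congr rfl term, Finset.sum_ite_eq, if_pos hi]
      ring
    rw [Finset.sum_congr rfl inner, ← Finset.sum_mul]
    ring
  -- L² bound
  have hsumb : ∑ j ∈ Finset.Icc 1 q, (b j)^2 ≤ 2 * F^2 := by
    have hmono : ∫ θ in (0:ℝ)..(2*π), G θ * G θ ≤ ∫ _ in (0:ℝ)..(2*π), F^2 := by
      apply intervalIntegral.integral_mono_on (by positivity)
        ((hGcont.mul hGcont).intervalIntegrable _ _) intervalIntegrable_const
      intro θ hθ
      have hb := hGbound θ hθ
      show G θ * G θ ≤ F^2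
      nlinarith [le_abs_self (G θ), neg_abs_le (G θ), abs_nonneg (G θ)]
    rw [hint, intervalIntegral.integral_const, smul_eq_mul] at hmono
    have hπ : 0 < π := Real.pi_pos
    nlinarith
  -- coefficientwise bound
  have step1 : ∑ j ∈ Finset.Icc 1 q, (j : ℝ) ^ k * (1 + Real.log j) ^ l * |a j|
      ≤ (Real.exp u / u) ^ l * ∑ j ∈ Finset.Icc 1 q, (1/(j:ℝ)) * |b j| := by
    rw [Finset.mul_sum]
    refine Finset.sum_le_sum fun j hj => ?_
    have hj1 : 1 ≤ j := (Finset.mem_Icc.1 hj).1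
    have hJ1 : (1:ℝ) ≤ (j:ℝ) := by exact_mod_cast hj1
    have hJ0 : (0:ℝ) < (j:ℝ) := by linarith
    have hlog : 0 ≤ Real.log j := Real.log_nonneg hJ1
    have e1 : (1 + Real.log j)^l ≤ (Real.exp u / u)^l * ((j:ℝ) ^ (u * l)) := by
      calc (1 + Real.log j)^l ≤ ((Real.exp u / u) * (j:ℝ) ^ u)^l :=
            pow_le_pow_left₀ (by linarith) (log_ineq hu hj1) l
        _ = (Real.exp u / u)^l * ((j:ℝ) ^ u)^l := mul_pow _ _ l
        _ = (Real.exp u / u)^l * ((j:ℝ) ^ (u * l)) := by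
            rw [← Real.rpow_natCast ((j:ℝ) ^ u) l, ← Real.rpow_mul (le_of_lt hJ0)]
    have e2 : (j:ℝ)^k * (j:ℝ) ^ (u * l) ≤ (j:ℝ)^s := by
      calc (j:ℝ)^k * (j:ℝ) ^ (u * l) = (j:ℝ) ^ ((k:ℝ) + u * l) := by
            rw [Real.rpow_add hJ0, Real.rpow_natCast]
        _ ≤ (j:ℝ) ^ ((s:ℝ)) := Real.rpow_le_rpow_of_exponent_le hJ1 (Nat.le_ceil _)
        _ = (j:ℝ)^s := Real.rpow_natCast _ s
    have e3 : (j:ℝ)^s * |a j| = (1/(j:ℝ)) * |b j| := by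
      rw [hb]
      rw [abs_mul, abs_of_nonneg (pow_nonneg (le_of_lt hJ0) (s+1)), pow_succ]
      field_simp
    have hEl : (0:ℝ) ≤ (Real.exp u / u)^l := by positivity
    calc (j : ℝ) ^ k * (1 + Real.log j) ^ l * |a j|
        ≤ (j : ℝ) ^ k * ((Real.exp u / u)^l * ((j:ℝ) ^ (u * l))) * |a j| := by
          apply mul_le_mul_of_nonneg_right _ (abs_nonneg _)
          exact mul_le_mul_of_nonneg_left e1 (by positivity)
      _ = (Real.exp u / u)^l * ((j:ℝ)^k * (j:ℝ) ^ (u * l) * |a j|) := by ring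
      _ ≤ (Real.exp u / u)^l * ((j:ℝ)^s * |a j|) := by
          apply mul_le_mul_of_nonneg_left _ hEl
          exact mul_le_mul_of_nonneg_right e2 (abs_nonneg _)
      _ = (Real.exp u / u)^l * ((1/(j:ℝ)) * |b j|) := by rw [e3]
  -- Cauchy–Schwarz
  set S : ℝ := ∑ j ∈ Finset.Icc 1 q, (1/(j:ℝ)) * |b j| with hS
  have hS0 : 0 ≤ S := Finset.sum_nonneg fun j _ => by positivity
  have hCS : S^2 ≤ (∑ j ∈ Finset.Icc 1 q, (1/(j:ℝ))^2)
      * (∑ j ∈ Finset.Icc 1 q, |b j|^2) :=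
    Finset.sum_mul_sq_le_sq_mul_sq _ _ _
  have habs : (∑ j ∈ Finset.Icc 1 q, |b j|^2) = ∑ j ∈ Finset.Icc 1 q, (b j)^2 :=
    Finset.sum_congr rfl fun j _ => sq_abs _
  have hS2 : S^2 ≤ 4 * F^2 := by
    have h1 := sum_inv_sq_le q
    have h2 : (0:ℝ) ≤ ∑ j ∈ Finset.Icc 1 q, (b j)^2 :=
      Finset.sum_nonneg fun j _ => sq_nonneg _
    have h3 : (0:ℝ) ≤ ∑ j ∈ Finset.Icc 1 q, (1/(j:ℝ))^2 :=
      Finset.sum_nonneg fun j _ => sq_nonneg _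
    rw [habs] at hCS
    nlinarith
  have hSF : S ≤ 2 * F := by nlinarith
  calc ∑ j ∈ Finset.Icc 1 q, (j : ℝ) ^ k * (1 + Real.log j) ^ l * |a j|
      ≤ (Real.exp u / u) ^ l * S := step1
    _ ≤ (Real.exp u / u) ^ l * (2 * F) := by
        apply mul_le_mul_of_nonneg_left hSF (by positivity)
    _ = 2 * (Real.exp u / u) ^ l * F := by ring
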